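/- Suppose k, r, n are positive integers with n ≥ 2 and r ≤ n − 1. Then the list chromatic number of C_{2k+1} □ P_n^r is at most r + 2, where P_n^r is the r-th power of the path on n vertices. -/

import Mathlib

open SimpleGraph Finset

attribute [local instance] Classical.propDecidable

namespace ATWork

variable {m : ℕ} [NeZero m]

/-- Cast of val back. -/
lemma zc (x : ZMod m) : ((x.val : ℕ) : ZMod m) = x := ZMod.natCast_rightInverse x

lemma repr_eq (x y : ZMod m) : y = x + ((y - x).val : ℕ) := by
  rw [zc]; ring

lemma val_add_one (z : ZMod m) : (z + 1).val = if z.val = m - 1 then 0 else z.val + 1 := by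
  have h1 : (z + 1 : ZMod m) = ((z.val + 1 : ℕ) : ZMod m) := by push_cast [zc]; ring
  have hv := ZMod.val_lt z
  have hm : 0 < m := Nat.pos_of_ne_zero (NeZero.ne m)
  rw [h1, ZMod.val_natCast]
  rcases Nat.lt_or_ge (z.val + 1) m with h | h
  · rw [Nat.mod_eq_of_lt h]
    have : z.val ≠ m - 1 := by omega
    simp [this]
  · have hz : z.val = m - 1 := by omega
    have h2 : m - 1 + 1 = m := by omega
    simp [hz, h2]

/-- properness of a cycle coloring defined through an index function. -/
def CProper (R : ZMod m → Finset ℕ) (c : ZMod m → ℕ) : Prop :=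
  ∀ x, c x ∈ R x ∧ c x ≠ c (x + 1)

lemma cyc_of_index (R : ZMod m → Finset ℕ) (v₀ : ZMod m) (G : ℕ → ℕ)
    (h1 : ∀ d, d < m → G d ∈ R (v₀ + (d : ℕ)))
    (h2 : ∀ d, d + 1 < m → G d ≠ G (d + 1))
    (h3 : G (m - 1) ≠ G 0) :
    CProper R (fun x => G ((x - v₀).val)) := by
  intro x
  have hd : x = v₀ + (((x - v₀).val : ℕ) : ZMod m) := repr_eq v₀ x
  constructor
  · have := h1 (x - v₀).val (ZMod.val_lt _)
    rwa [← hd] at this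
  · show G ((x - v₀).val) ≠ G ((x + 1 - v₀).val)
    have hs : (x + 1 - v₀) = (x - v₀) + 1 := by ring
    rw [hs, val_add_one]
    rcases eq_or_ne (x - v₀).val (m - 1) with h | h
    · simp only [h, if_pos rfl]
      exact h3
    · simp only [if_neg h]
      have := ZMod.val_lt (x - v₀)
      exact h2 _ (by omega)

/-- deterministic choice from a finset avoiding nothing -/
noncomputable def pick (s : Finset ℕ) : ℕ := if h : s.Nonempty then s.min' h else 0

lemma pick_mem {s : Finset ℕ} (h : s.Nonempty) : pick s ∈ s := by
  rw [pick, dif_pos h]; exact s.min'_mem h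

lemma pick_mem_card {s : Finset ℕ} (h : 1 ≤ s.card) : pick s ∈ s :=
  pick_mem (Finset.card_pos.mp h)

lemma erase_nonempty {s : Finset ℕ} {a : ℕ} (h : 2 ≤ s.card) : (s.erase a).Nonempty := by
  apply Finset.card_pos.mp
  have h2 := Finset.pred_card_le_card_erase (a := a) (s := s)
  omega


section CycColor

variable {R : ZMod m → Finset ℕ}

lemma gr_step_ne (f : ℕ → Finset ℕ) (a : ℕ) (hcard : ∀ i, 2 ≤ (f i).card) :
    True := trivial

/-- greedy sequence with prescribed first value, walking i ↦ set (f i), each step avoiding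
the previous value. -/
noncomputable def greedy (f : ℕ → Finset ℕ) (a : ℕ) : ℕ → ℕ
  | 0 => a
  | (t+1) => pick ((f (t+1)).erase (greedy f a t))

lemma greedy_ne (f : ℕ → Finset ℕ) (a : ℕ) (hc : ∀ i, 2 ≤ (f i).card) (t : ℕ) :
    greedy f a (t+1) ≠ greedy f a t := by
  have h := pick_mem (erase_nonempty (s := f (t+1)) (a := greedy f a t) (hc (t+1)))
  exact Finset.ne_of_mem_erase h

lemma greedy_mem (f : ℕ → Finset ℕ) (a : ℕ) (hc : ∀ i, 2 ≤ (f i).card) (ha : a ∈ f 0) (t : ℕ) :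
    greedy f a t ∈ f t := by
  cases t with
  | zero => exact ha
  | succ t =>
      have h := pick_mem (erase_nonempty (s := f (t+1)) (a := greedy f a t) (hc (t+1)))
      exact Finset.mem_of_mem_erase h

/-- Cycle with all lists of size ≥ 2 and one list of size ≥ 3: two distinct proper colorings. -/
lemma cyc_two_colorings (hm : 3 ≤ m) (hR2 : ∀ x, 2 ≤ (R x).card) (v₀ : ZMod m)
    (h3 : 3 ≤ (R v₀).card) :
    ∃ c c' : ZMod m → ℕ, CProper R c ∧ CProper R c' ∧ c ≠ c' := by
  haveI : Fact (1 < m) := ⟨by omega⟩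
  -- the list sequence along indices 1..m-1 : index t ↦ vertex v₀ + (t+1)
  set f : ℕ → Finset ℕ := fun t => R (v₀ + ((t + 1 : ℕ) : ZMod m)) with hf
  have hfc : ∀ i, 2 ≤ (f i).card := fun i => hR2 _
  -- build coloring for a given start value a ∈ R (v₀ + 1)
  have build : ∀ a, a ∈ R (v₀ + 1) →
      ∃ c : ZMod m → ℕ, CProper R c ∧ c (v₀ + 1) = a := by
    intro a ha
    have ha0 : a ∈ f 0 := by
      rw [hf]; simpa using ha
    set G : ℕ → ℕ := fun d =>
      if d = 0 then pick (R v₀ \ {greedy f a 0, greedy f a (m-2)}) else greedy f a (d-1) with hG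
    have hGtopmem : pick (R v₀ \ {greedy f a 0, greedy f a (m-2)}) ∈
        R v₀ \ {greedy f a 0, greedy f a (m-2)} := by
      apply pick_mem
      apply Finset.card_pos.mp
      have h1 : ({greedy f a 0, greedy f a (m-2)} : Finset ℕ).card ≤ 2 := by
        apply le_trans (Finset.card_insert_le _ _); simp
      have h2 := Finset.le_card_sdiff ({greedy f a 0, greedy f a (m-2)} : Finset ℕ) (R v₀)
      omega
    have hGtop := Finset.mem_sdiff.mp hGtopmem
    have hGtop2 : pick (R v₀ \ {greedy f a 0, greedy f a (m-2)}) ≠ greedy f a 0 ∧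
        pick (R v₀ \ {greedy f a 0, greedy f a (m-2)}) ≠ greedy f a (m-2) := by
      constructor <;> intro h <;> apply hGtop.2 <;> simp [h]
    refine ⟨fun x => G ((x - v₀).val), cyc_of_index R v₀ G ?_ ?_ ?_, ?_⟩
    · intro d hd
      rcases Nat.eq_zero_or_pos d with h0 | h0
      · subst h0; simpa [hG] using hGtop.1
      · have hGd : G d = greedy f a (d-1) := by rw [hG]; simp [Nat.pos_iff_ne_zero.mp h0]
        have hd1 : d - 1 + 1 = d := by omega
        have heq : f (d-1) = R (v₀ + ((d : ℕ) : ZMod m)) := by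
          show R (v₀ + ((d - 1 + 1 : ℕ) : ZMod m)) = _
          rw [hd1]
        rw [hGd, ← heq]
        exact greedy_mem f a hfc ha0 (d-1)
    · intro d hd
      rcases Nat.eq_zero_or_pos d with h0 | h0
      · subst h0
        have h1 : G 0 = pick (R v₀ \ {greedy f a 0, greedy f a (m-2)}) := by simp [hG]
        have h2 : G 1 = greedy f a 0 := by simp [hG]
        rw [h1, h2]
        exact hGtop2.1
      · have h1 : G d = greedy f a (d-1) := by rw [hG]; simp [Nat.pos_iff_ne_zero.mp h0]
        have h2 : G (d+1) = greedy f a d := by rw [hG]; simp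
        rw [h1, h2]
        have := greedy_ne f a hfc (d-1)
        have hd1 : d - 1 + 1 = d := by omega
        rw [hd1] at this
        exact this.symm
    · have hm12 : m - 1 - 1 = m - 2 := by omega
      have h1 : G (m-1) = greedy f a (m-2) := by
        rw [hG]; simp only [if_neg (by omega : m - 1 ≠ 0)]; rw [hm12]
      have h2 : G 0 = pick (R v₀ \ {greedy f a 0, greedy f a (m-2)}) := by rw [hG]; simp
      rw [h1, h2]
      exact fun h => hGtop2.2 h.symm
    · show G ((v₀ + 1 - v₀).val) = a
      have : (v₀ + 1 - v₀ : ZMod m) = 1 := by ring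
      rw [this, ZMod.val_one m]
      show greedy f a 0 = a
      rfl
  -- two distinct start values
  have hne1 : (R (v₀ + 1)).Nonempty := Finset.card_pos.mp (by have := hR2 (v₀+1); omega)
  set a₁ := pick (R (v₀ + 1)) with ha₁
  have ha₁m : a₁ ∈ R (v₀ + 1) := pick_mem hne1
  set a₂ := pick ((R (v₀ + 1)).erase a₁) with ha₂
  have ha₂m' : a₂ ∈ (R (v₀ + 1)).erase a₁ := pick_mem (erase_nonempty (hR2 _))
  have ha₂m : a₂ ∈ R (v₀ + 1) := Finset.mem_of_mem_erase ha₂m'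
  have hne : a₂ ≠ a₁ := Finset.ne_of_mem_erase ha₂m'
  obtain ⟨c₁, hc₁, hv₁⟩ := build a₁ ha₁m
  obtain ⟨c₂, hc₂, hv₂⟩ := build a₂ ha₂m
  refine ⟨c₁, c₂, hc₁, hc₂, ?_⟩
  intro h
  rw [h] at hv₁
  rw [hv₁] at hv₂
  exact hne hv₂.symm

/-- Cycle with all lists of size ≥ 2 and some `e ∈ R u \ R (u+1)`: a proper coloring exists. -/
lemma cyc_coloring_of_step (hm : 3 ≤ m) (hR2 : ∀ x, 2 ≤ (R x).card) (u : ZMod m) (e : ℕ)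
    (he : e ∈ R u) (hne : e ∉ R (u + 1)) :
    ∃ c : ZMod m → ℕ, CProper R c := by
  -- greedy downward: index t ↦ position m-1-t ↦ vertex u + (m-1-t)
  set f : ℕ → Finset ℕ := fun t => if t = 0 then (R (u + ((m-1 : ℕ) : ZMod m))).erase e
      else (R (u + ((m-1-t : ℕ) : ZMod m))) with hf
  -- gs t ∈ R (u + (m-1-t)) and gs avoids e at 0, successive distinct
  set gs : ℕ → ℕ := greedy (fun t => R (u + ((m-1-t : ℕ) : ZMod m))) (pick ((R (u + ((m-1 : ℕ) : ZMod m))).erase e)) with hgs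
  have hgs0 : gs 0 ∈ (R (u + ((m-1 : ℕ) : ZMod m))).erase e := pick_mem (erase_nonempty (hR2 _))
  have hgsmem : ∀ t, gs t ∈ R (u + ((m-1-t : ℕ) : ZMod m)) := by
    intro t
    apply greedy_mem _ _ (fun i => hR2 _)
    simpa using (Finset.mem_of_mem_erase hgs0 : pick ((R (u + ((m-1 : ℕ) : ZMod m))).erase e) ∈ _)
  have hgsne : ∀ t, gs (t+1) ≠ gs t := fun t => greedy_ne _ _ (fun i => hR2 _) t
  set G : ℕ → ℕ := fun d => if d = 0 then e else gs (m - 1 - d) with hG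
  refine ⟨fun x => G ((x - u).val), cyc_of_index R u G ?_ ?_ ?_⟩
  · intro d hd
    rcases Nat.eq_zero_or_pos d with h0 | h0
    · subst h0; simpa [hG] using he
    · have h1 : G d = gs (m-1-d) := by rw [hG]; simp [Nat.pos_iff_ne_zero.mp h0]
      rw [h1]
      have := hgsmem (m-1-d)
      have hrw : m - 1 - (m - 1 - d) = d := by omega
      rwa [hrw] at this
  · intro d hd
    rcases Nat.eq_zero_or_pos d with h0 | h0
    · subst h0
      have h1 : G 0 = e := by rw [hG]; simp
      have h2 : G 1 = gs (m-2) := by rw [hG]; simp [show m - 1 - 1 = m - 2 by omega]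
      rw [h1, h2]
      have := hgsmem (m-2)
      have hrw : m - 1 - (m - 2) = 1 := by omega
      rw [hrw] at this
      intro h
      rw [← h] at this
      exact hne (by simpa using this)
    · have h1 : G d = gs (m-1-d) := by rw [hG]; simp [Nat.pos_iff_ne_zero.mp h0]
      have h2 : G (d+1) = gs (m-1-(d+1)) := by rw [hG]; simp
      rw [h1, h2]
      have := hgsne (m-1-(d+1))
      have hrw : m - 1 - (d+1) + 1 = m - 1 - d := by omega
      rw [hrw] at this
      exact this
  · have h1 : G (m-1) = gs 0 := by
      rw [hG]; simp only [if_neg (by omega : m - 1 ≠ 0)]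
      congr 1; omega
    have h2 : G 0 = e := by rw [hG]; simp
    rw [h1, h2]
    exact Finset.ne_of_mem_erase hgs0

/-- If no proper coloring exists (with all lists of size ≥ 2) then all lists are equal
to a single 2-element set. -/
lemma not_all_eq (hm : 3 ≤ m) (hR2 : ∀ x, 2 ≤ (R x).card) (hnc : ¬ ∃ c, CProper R c) :
    ∃ A : Finset ℕ, A.card = 2 ∧ ∀ x, R x = A := by
  have hcard : ∀ x, (R x).card = 2 := by
    intro x
    by_contra h
    have h3 : 3 ≤ (R x).card := by have := hR2 x; omega
    obtain ⟨c, _, hc, _, _⟩ := cyc_two_colorings hm hR2 x h3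
    exact hnc ⟨c, hc⟩
  have hstep : ∀ x, R x = R (x + 1) := by
    intro x
    by_contra h
    have hsub : ¬ R x ⊆ R (x + 1) := by
      intro hs
      exact h (Finset.eq_of_subset_of_card_le hs (by rw [hcard, hcard]))
    obtain ⟨e, he, hne⟩ := Finset.not_subset.mp hsub
    obtain ⟨c, hc⟩ := cyc_coloring_of_step hm hR2 x e he hne
    exact hnc ⟨c, hc⟩
  have hnat : ∀ i : ℕ, R ((i : ℕ) : ZMod m) = R 0 := by
    intro i
    induction i with
    | zero => simp
    | succ i ih =>
        have : ((i + 1 : ℕ) : ZMod m) = ((i : ℕ) : ZMod m) + 1 := by push_cast; ring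
        rw [this, ← hstep, ih]
  refine ⟨R 0, hcard 0, fun x => ?_⟩
  have := hnat x.val
  rwa [zc] at this

end CycColor

section ClaimA

variable {R : ZMod m → Finset ℕ}

attribute [local instance] Classical.propDecidable

lemma cast_eq_iff_lt {i j : ℕ} (hi : i < m) (hj : j < m) :
    ((i : ZMod m) = (j : ZMod m)) ↔ i = j := by
  constructor
  · intro h
    have := congrArg ZMod.val h
    rwa [ZMod.val_cast_of_lt hi, ZMod.val_cast_of_lt hj] at this
  · intro h; rw [h]

lemma cast_m_sub_one (hm : 3 ≤ m) : ((m - 1 : ℕ) : ZMod m) = -1 := by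
  have h1 : ((m - 1 : ℕ) : ZMod m) = (m : ℕ) - 1 := by
    push_cast [Nat.cast_sub (by omega : 1 ≤ m)]; ring
  rw [h1, ZMod.natCast_self]; ring

lemma add_one_ne (hm : 3 ≤ m) (v : ZMod m) : v + 1 ≠ v := by
  haveI : Fact (1 < m) := ⟨by omega⟩
  intro h
  have h2 : (1 : ZMod m) = 0 := by
    have := congrArg (fun z => z - v) h
    simpa using this
  exact one_ne_zero h2

/-- an odd cycle with lists of size ≥ 2 never has a *unique* proper coloring. -/
lemma exists_second_coloring (hm : 3 ≤ m) (hodd : Odd m) (hR2 : ∀ x, 2 ≤ (R x).card)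
    {f : ZMod m → ℕ} (hf : CProper R f) : ∃ g, CProper R g ∧ g ≠ f := by
  haveI : Fact (1 < m) := ⟨by omega⟩
  have hmem : ∀ x, f x ∈ R x := fun x => (hf x).1
  have hprop : ∀ x, f x ≠ f (x + 1) := fun x => (hf x).2
  have hprop' : ∀ x, f (x - 1) ≠ f x := by
    intro x
    have := hprop (x - 1)
    rwa [sub_add_cancel] at this
  -- Step 1 : a free recoloring of a single vertex
  by_cases hrec : ∃ v, ∃ y ∈ R v, y ≠ f v ∧ y ≠ f (v - 1) ∧ y ≠ f (v + 1)
  · obtain ⟨v, y, hy, hy1, hy2, hy3⟩ := hrec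
    refine ⟨Function.update f v y, ?_, ?_⟩
    · intro x
      rcases eq_or_ne x v with h | h
      · subst h
        rw [Function.update_self, Function.update_of_ne (add_one_ne hm x) _ _]
        exact ⟨hy, hy3⟩
      · rw [Function.update_of_ne h]
        rcases eq_or_ne (x + 1) v with h2 | h2
        · rw [h2, Function.update_self]
          have hxv : x = v - 1 := by rw [← h2]; ring
          rw [hxv]
          exact ⟨hmem _, fun hh => hy2 hh.symm⟩
        · rw [Function.update_of_ne h2]
          exact ⟨hmem x, hprop x⟩
    · intro h
      have := congrFun h v
      rw [Function.update_self] at this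
      exact hy1 this
  push_neg at hrec
  -- hrec : ∀ v, ∀ y ∈ R v, y = f v ∨ y = f (v-1) ∨ y = f (v+1)  (as ¬(≠∧≠∧≠))
  have hrec' : ∀ v, ∀ y ∈ R v, y = f v ∨ y = f (v - 1) ∨ y = f (v + 1) := by
    intro v y hy
    by_cases h1 : y = f v
    · exact Or.inl h1
    by_cases h2 : y = f (v - 1)
    · exact Or.inr (Or.inl h2)
    exact Or.inr (Or.inr (hrec v y hy h1 h2))
  have pairing : ∀ v, f (v - 1) ∈ R v ∨ f (v + 1) ∈ R v := by
    intro v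
    have hne : ((R v).erase (f v)).Nonempty := erase_nonempty (hR2 v)
    set y := pick ((R v).erase (f v)) with hy
    have hym := pick_mem hne
    have hyR : y ∈ R v := Finset.mem_of_mem_erase hym
    have hyne : y ≠ f v := Finset.ne_of_mem_erase hym
    rcases hrec' v y hyR with h | h | h
    · exact absurd h hyne
    · left; rwa [← h]
    · right; rwa [← h]
  by_cases hPall : ∀ v, f (v - 1) ∈ R v
  · refine ⟨fun v => f (v - 1), ?_, ?_⟩
    · intro x
      refine ⟨hPall x, ?_⟩
      show f (x - 1) ≠ f (x + 1 - 1)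
      have hx : (x + 1 - 1 : ZMod m) = x := by ring
      rw [hx]
      exact hprop' x
    · intro h
      exact hprop' 0 (congrFun h 0)
  by_cases hSall : ∀ v, f (v + 1) ∈ R v
  · refine ⟨fun v => f (v + 1), ?_, ?_⟩
    · intro x
      exact ⟨hSall x, hprop (x + 1)⟩
    · intro h
      exact (hprop 0 (congrFun h 0).symm).elim
  push_neg at hPall hSall
  obtain ⟨u, hu⟩ := hPall
  obtain ⟨w₀, hw₀⟩ := hSall
  have hSu : f (u + 1) ∈ R u := (pairing u).resolve_left hu
  set FS : ZMod m → Prop := fun z => f (z - 1) ∈ R z ∧ f (z - 1) ≠ f (z + 1) with hFS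
  have hnotS_FS : ∀ z, f (z + 1) ∉ R z → FS z := by
    intro z h
    have hp : f (z - 1) ∈ R z := (pairing z).resolve_right h
    exact ⟨hp, fun hh => h (hh ▸ hp)⟩
  set T : Finset ℕ := (Finset.Icc 1 (m - 2)).filter (fun t => FS (u + (t : ℕ))) with hT
  by_cases hTne : T.Nonempty
  · -- forward shift construction
    set t := T.min' hTne with ht
    have htT : t ∈ T := T.min'_mem hTne
    have ht1 : 1 ≤ t := (Finset.mem_Icc.mp (Finset.mem_filter.mp htT).1).1
    have ht2 : t ≤ m - 2 := (Finset.mem_Icc.mp (Finset.mem_filter.mp htT).1).2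
    have htFS : FS (u + (t : ℕ)) := (Finset.mem_filter.mp htT).2
    have hSblock : ∀ i : ℕ, i < t → f (u + (i : ℕ) + 1) ∈ R (u + (i : ℕ)) := by
      intro i hi
      rcases Nat.eq_zero_or_pos i with h0 | h0
      · subst h0; simpa using hSu
      · by_contra hcon
        have hFSi : FS (u + (i : ℕ)) := hnotS_FS _ hcon
        have : i ∈ T := Finset.mem_filter.mpr ⟨Finset.mem_Icc.mpr ⟨h0, by omega⟩, hFSi⟩
        have := T.min'_le i this
        omega
    set G : ℕ → ℕ := fun d => if d < t then f (u + (d : ℕ) + 1)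
        else if d = t then f (u + (t : ℕ) - 1) else f (u + (d : ℕ)) with hG
    have hGlt : ∀ d, d < t → G d = f (u + (d : ℕ) + 1) := by
      intro d hd; simp only [hG]; rw [if_pos hd]
    have hGt : G t = f (u + (t : ℕ) - 1) := by
      simp only [hG]; simp
    have hGgt : ∀ d, t < d → G d = f (u + (d : ℕ)) := by
      intro d hd; simp only [hG]
      rw [if_neg (by omega : ¬ d < t), if_neg (by omega : ¬ d = t)]
    refine ⟨fun x => G ((x - u).val), ⟨cyc_of_index R u G ?_ ?_ ?_, ?_⟩⟩
    · intro d hd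
      rcases lt_trichotomy d t with h | h | h
      · rw [hGlt d h]; exact hSblock d h
      · subst h; rw [hGt]; exact htFS.1
      · rw [hGgt d h]; exact hmem _
    · intro d hd
      rcases lt_trichotomy (d+1) t with h | h | h
      · rw [hGlt d (by omega), hGlt (d+1) h]
        have hc : (u + ((d+1 : ℕ) : ZMod m)) = u + (d : ℕ) + 1 := by push_cast; ring
        rw [hc]
        exact hprop (u + (d : ℕ) + 1)
      · rw [hGlt d (by omega), h, hGt]
        have hc : (u + ((d : ℕ) : ZMod m) + 1) = u + (t : ℕ) := by
          have hd' : d = t - 1 := by omega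
          subst hd'
          push_cast [Nat.cast_sub ht1]
          ring
        rw [hc]
        intro hh
        exact hprop' (u + (t : ℕ)) hh.symm
      · rcases lt_trichotomy d t with h2 | h2 | h2
        · omega
        · rw [h2, hGt, hGgt (t+1) (by omega)]
          have hc : (u + ((t+1 : ℕ) : ZMod m)) = u + (t : ℕ) + 1 := by push_cast; ring
          rw [hc]
          exact htFS.2
        · rw [hGgt d h2, hGgt (d+1) (by omega)]
          have hc : (u + ((d+1 : ℕ) : ZMod m)) = u + (d : ℕ) + 1 := by push_cast; ring
          rw [hc]
          exact hprop _
    · rw [hGgt (m-1) (by omega), hGlt 0 (by omega)]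
      have hc1 : (u + ((m - 1 : ℕ) : ZMod m)) = u - 1 := by rw [cast_m_sub_one hm]; ring
      have hc0 : (u + ((0 : ℕ) : ZMod m) + 1) = u + 1 := by push_cast; ring
      rw [hc1, hc0]
      intro hh
      rw [hh] at hu
      exact hu hSu
    · intro hcon
      have := congrFun hcon u
      simp only [sub_self, ZMod.val_zero] at this
      rw [hGlt 0 (by omega)] at this
      have hc0 : (u + ((0 : ℕ) : ZMod m) + 1) = u + 1 := by push_cast; ring
      rw [hc0] at this
      exact hprop u this.symm
  · -- no forward stop: S holds everywhere except u - 1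
    have hSext : ∀ z, z ≠ u - 1 → f (z + 1) ∈ R z := by
      intro z hz
      by_contra hcon
      have hFSz := hnotS_FS z hcon
      set i := (z - u).val with hi
      have hzi : z = u + (i : ℕ) := repr_eq u z
      have hilt : i < m := ZMod.val_lt _
      have hi0 : i ≠ 0 := by
        intro h
        rw [h] at hzi
        push_cast at hzi
        rw [hzi] at hcon
        simp only [add_zero] at hcon
        exact hcon hSu
      have him : i ≠ m - 1 := by
        intro h
        rw [h] at hzi
        rw [cast_m_sub_one hm] at hzi
        apply hz
        rw [hzi]; ring
      have : i ∈ T := by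
        rw [hT]
        refine Finset.mem_filter.mpr ⟨Finset.mem_Icc.mpr ⟨by omega, by omega⟩, ?_⟩
        rwa [← hzi]
      exact hTne ⟨i, this⟩
    obtain ⟨w, hw⟩ : ∃ w : ZMod m, w = u - 1 := ⟨u - 1, rfl⟩
    have hwu : w + 1 = u := by rw [hw]; ring
    have hw₀eq : w₀ = w := by
      by_contra h
      have h' : w₀ ≠ u - 1 := by rw [← hw]; exact h
      exact hw₀ (hSext w₀ h')
    have hnotSw' : f u ∉ R w := by
      have h2 : f (w + 1) ∉ R w := hw₀eq ▸ hw₀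
      rwa [hwu] at h2
    have hPw : f (w - 1) ∈ R w := by
      rcases pairing w with h | h
      · exact h
      · rw [hwu] at h
        exact absurd h hnotSw'
    set BS : ZMod m → Prop := fun z => f (z + 1) ∈ R z ∧ f (z + 1) ≠ f (z - 1) with hBS
    have hnotP_BS : ∀ z, f (z - 1) ∉ R z → BS z := by
      intro z h
      have hs : f (z + 1) ∈ R z := (pairing z).resolve_left h
      exact ⟨hs, fun hh => h (hh ▸ hs)⟩
    set T' : Finset ℕ := (Finset.Icc 1 (m - 2)).filter (fun s => BS (w - (s : ℕ))) with hT'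
    by_cases hT'ne : T'.Nonempty
    · -- backward shift construction
      set s := T'.min' hT'ne with hs
      have hsT : s ∈ T' := T'.min'_mem hT'ne
      have hs1 : 1 ≤ s := (Finset.mem_Icc.mp (Finset.mem_filter.mp hsT).1).1
      have hs2 : s ≤ m - 2 := (Finset.mem_Icc.mp (Finset.mem_filter.mp hsT).1).2
      have hsBS : BS (w - (s : ℕ)) := (Finset.mem_filter.mp hsT).2
      have hPblock : ∀ i : ℕ, i < s → f (w - (i : ℕ) - 1) ∈ R (w - (i : ℕ)) := by
        intro i hi
        rcases Nat.eq_zero_or_pos i with h0 | h0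
        · subst h0; simpa using hPw
        · by_contra hcon
          have hBSi : BS (w - (i : ℕ)) := hnotP_BS _ hcon
          have : i ∈ T' := Finset.mem_filter.mpr ⟨Finset.mem_Icc.mpr ⟨h0, by omega⟩, hBSi⟩
          have := T'.min'_le i this
          omega
      set z : ZMod m := w - (s : ℕ) with hz
      set K : ℕ → ℕ := fun d => if d = 0 then f (z + 1)
          else if d ≤ s then f (z + (d : ℕ) - 1) else f (z + (d : ℕ)) with hK
      have hK0 : K 0 = f (z + 1) := by simp only [hK]; simp
      have hKle : ∀ d, 1 ≤ d → d ≤ s → K d = f (z + (d : ℕ) - 1) := by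
        intro d h1 h2; simp only [hK]; rw [if_neg (by omega : ¬ d = 0), if_pos h2]
      have hKgt : ∀ d, s < d → K d = f (z + (d : ℕ)) := by
        intro d hd; simp only [hK]
        rw [if_neg (by omega : ¬ d = 0), if_neg (by omega : ¬ d ≤ s)]
      have hzw : ∀ d : ℕ, d ≤ s → z + (d : ℕ) = w - ((s - d : ℕ) : ZMod m) := by
        intro d hd
        rw [hz]
        push_cast [Nat.cast_sub hd]
        ring
      refine ⟨fun x => K ((x - z).val), ⟨cyc_of_index R z K ?_ ?_ ?_, ?_⟩⟩
      · intro d hd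
        rcases Nat.eq_zero_or_pos d with h0 | h0
        · subst h0; simp only [Nat.cast_zero, add_zero]; rw [hK0]; exact hsBS.1
        rcases le_or_gt d s with h1 | h1
        · rw [hKle d h0 h1, hzw d h1]
          exact hPblock (s - d) (by omega)
        · rw [hKgt d h1]; exact hmem _
      · intro d hd
        rcases Nat.eq_zero_or_pos d with h0 | h0
        · subst h0
          rw [hK0, hKle 1 le_rfl hs1]
          have hc : (z + ((1:ℕ) : ZMod m) - 1) = z := by push_cast; ring
          rw [hc]
          exact fun hh => hprop z hh.symm
        rcases Nat.lt_or_ge (d+1) (s+1) with h1 | h1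
        · -- d+1 ≤ s
          rw [hKle d h0 (by omega), hKle (d+1) (by omega) (by omega)]
          have hc : (z + ((d+1:ℕ) : ZMod m) - 1) = z + (d : ℕ) := by push_cast; ring
          rw [hc]
          exact hprop' (z + (d : ℕ))
        rcases Nat.eq_or_lt_of_le h1 with h2 | h2
        · -- d = s
          have hds : d = s := by omega
          rw [hds, hKle s hs1 le_rfl, hKgt (s+1) (by omega)]
          have hc1 : (z + ((s:ℕ) : ZMod m) - 1) = w - 1 := by
            rw [hzw s le_rfl]; simp
          have hc2 : (z + ((s+1:ℕ) : ZMod m)) = w + 1 := by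
            rw [hz]; push_cast; ring
          rw [hc1, hc2, hwu]
          intro hh
          rw [← hh] at hnotSw'
          exact hnotSw' hPw
        · -- d > s
          rw [hKgt d (by omega), hKgt (d+1) (by omega)]
          have hc : (z + ((d+1:ℕ) : ZMod m)) = z + (d : ℕ) + 1 := by push_cast; ring
          rw [hc]
          exact hprop _
      · rw [hKgt (m-1) (by omega), hK0]
        have hc1 : (z + ((m - 1 : ℕ) : ZMod m)) = z - 1 := by rw [cast_m_sub_one hm]; ring
        rw [hc1]
        exact fun hh => hsBS.2 hh.symm
      · intro hcon
        have := congrFun hcon z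
        simp only [sub_self, ZMod.val_zero] at this
        rw [hK0] at this
        exact hprop z this.symm
    · -- both walks fail : chain contradiction
      have hPext : ∀ zz, zz ≠ u → f (zz - 1) ∈ R zz := by
        intro zz hzz
        by_contra hcon
        have hBSz := hnotP_BS zz hcon
        set i := (w - zz).val with hi
        have hzi : zz = w - (i : ℕ) := by
          have := repr_eq zz w
          have h2 : ((w - zz).val : ZMod m) = w - zz := zc _
          rw [hi]
          rw [h2]
          ring
        have hilt : i < m := ZMod.val_lt _
        have hi0 : i ≠ 0 := by
          intro h
          rw [h] at hzi
          push_cast at hzi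
          rw [hzi] at hcon
          simp only [sub_zero] at hcon
          exact hcon hPw
        have him : i ≠ m - 1 := by
          intro h
          rw [h] at hzi
          rw [cast_m_sub_one hm] at hzi
          apply hzz
          rw [hzi, hw]; ring
        have : i ∈ T' := by
          rw [hT']
          refine Finset.mem_filter.mpr ⟨Finset.mem_Icc.mpr ⟨by omega, by omega⟩, ?_⟩
          rwa [← hzi]
        exact hT'ne ⟨i, this⟩
      have hQ : ∀ zz, zz ≠ u → zz ≠ u - 1 → f (zz - 1) = f (zz + 1) := by
        intro zz h1 h2
        by_contra hne
        -- zz is a forward stop, contradicting emptiness of T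
        set i := (zz - u).val with hi
        have hzi : zz = u + (i : ℕ) := repr_eq u zz
        have hilt : i < m := ZMod.val_lt _
        have hi0 : i ≠ 0 := by
          intro h
          rw [h] at hzi
          push_cast at hzi
          simp only [add_zero] at hzi
          exact h1 hzi
        have him : i ≠ m - 1 := by
          intro h
          rw [h] at hzi
          rw [cast_m_sub_one hm] at hzi
          apply h2
          rw [hzi]; ring
        have hFSz : FS zz := ⟨hPext zz h1, hne⟩
        have : i ∈ T := by
          rw [hT]
          refine Finset.mem_filter.mpr ⟨Finset.mem_Icc.mpr ⟨by omega, by omega⟩, ?_⟩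
          rwa [← hzi]
        exact hTne ⟨i, this⟩
      obtain ⟨k, hk⟩ := hodd
      have hk1 : 1 ≤ k := by omega
      have chain : ∀ i : ℕ, i ≤ k → f u = f (u + ((2*i : ℕ) : ZMod m)) := by
        intro i hik
        induction i with
        | zero => simp
        | succ i ih =>
            have hik' : i ≤ k := by omega
            have hprev := ih hik'
            set zz : ZMod m := u + ((2*i+1 : ℕ) : ZMod m) with hzz
            have hz1 : zz ≠ u := by
              rw [hzz]
              intro h
              rw [add_eq_left] at h
              have h2 : ((2*i+1 : ℕ) : ZMod m) = ((0:ℕ) : ZMod m) := by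
                rw [Nat.cast_zero]; exact h
              rw [cast_eq_iff_lt (by omega) (by omega)] at h2
              omega
            have hz2 : zz ≠ u - 1 := by
              rw [hzz]
              intro h
              have h4 : ((2*i+1:ℕ) : ZMod m) = u - 1 - u := by rw [← h]; ring
              have h5 : (u - 1 - u : ZMod m) = -1 := by ring
              have h2 : ((2*i+1 : ℕ) : ZMod m) = ((m-1 : ℕ) : ZMod m) := by
                rw [cast_m_sub_one hm, h4, h5]
              rw [cast_eq_iff_lt (by omega) (by omega)] at h2
              omega
            have hq := hQ zz hz1 hz2
            have hc1 : zz - 1 = u + ((2*i : ℕ) : ZMod m) := by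
              rw [hzz]; push_cast; ring
            have hc2 : zz + 1 = u + ((2*(i+1) : ℕ) : ZMod m) := by
              rw [hzz]; push_cast; ring
            rw [hc1, hc2] at hq
            rw [hprev, hq]
      have hfinal := chain k le_rfl
      have hc : ((2*k : ℕ) : ZMod m) = -1 := by
        have : (2*k : ℕ) = m - 1 := by omega
        rw [this, cast_m_sub_one hm]
      rw [hc] at hfinal
      have : u + (-1 : ZMod m) = u - 1 := by ring
      rw [this] at hfinal
      exact (hprop' u hfinal.symm).elim

end ClaimA

section Pairs

lemma sdiff_insert_not_mem {s t : Finset ℕ} {a : ℕ} (h : a ∉ s) : s \ insert a t = s \ t := by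
  ext x
  simp only [Finset.mem_sdiff, Finset.mem_insert]
  constructor
  · rintro ⟨hx, hh⟩
    exact ⟨hx, fun ht => hh (Or.inr ht)⟩
  · rintro ⟨hx, hh⟩
    exact ⟨hx, fun hor => hor.elim (fun he => h (he ▸ hx)) hh⟩

lemma insert_sdiff_aux {s t : Finset ℕ} {a : ℕ} (ha : a ∈ s) (hb : a ∉ t) :
    insert a (s \ insert a t) = s \ t := by
  ext x
  simp only [Finset.mem_insert, Finset.mem_sdiff]
  constructor
  · rintro (rfl | ⟨hx, hh⟩)
    · exact ⟨ha, hb⟩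
    · exact ⟨hx, fun ht => hh (Or.inr ht)⟩
  · rintro ⟨hx, hh⟩
    by_cases hxa : x = a
    · exact Or.inl hxa
    · exact Or.inr ⟨hx, fun hor => hor.elim hxa hh⟩

lemma pairs_lemma {L2 B : ZMod m → Finset ℕ} {c c' : ZMod m → ℕ} {A A' : Finset ℕ}
    (h1 : ∀ i, L2 i \ insert (c i) (B i) = A)
    (h2 : ∀ i, L2 i \ insert (c' i) (B i) = A')
    (h3 : A.card = 2) (h3' : A'.card = 2)
    (h4 : ∀ i, 3 ≤ (L2 i \ B i).card)
    (hcB : ∀ i, c i ∉ B i) (hc'B : ∀ i, c' i ∉ B i)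
    (h5 : ∃ i₀, c i₀ ≠ c' i₀)
    (h6 : ∀ i, c i ≠ c (i + 1)) : False := by
  have hcL : ∀ i, c i ∈ L2 i := by
    intro i
    by_contra h
    have heq := h1 i
    rw [sdiff_insert_not_mem h] at heq
    have h7 := h4 i
    rw [heq, h3] at h7
    omega
  have hc'L : ∀ i, c' i ∈ L2 i := by
    intro i
    by_contra h
    have heq := h2 i
    rw [sdiff_insert_not_mem h] at heq
    have h7 := h4 i
    rw [heq, h3'] at h7
    omega
  have hcA : ∀ i, c i ∉ A := by
    intro i h
    rw [← h1 i] at h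
    exact (Finset.mem_sdiff.mp h).2 (Finset.mem_insert_self _ _)
  have hc'A' : ∀ i, c' i ∉ A' := by
    intro i h
    rw [← h2 i] at h
    exact (Finset.mem_sdiff.mp h).2 (Finset.mem_insert_self _ _)
  have key : ∀ i, insert (c i) A = insert (c' i) A' := by
    intro i
    rw [← h1 i, ← h2 i, insert_sdiff_aux (hcL i) (hcB i), insert_sdiff_aux (hc'L i) (hc'B i)]
  by_cases hAA' : A = A'
  · obtain ⟨i₀, hi₀⟩ := h5
    apply hi₀
    have hk := key i₀
    rw [← hAA'] at hk
    have : c i₀ ∈ insert (c' i₀) A := by rw [← hk]; exact Finset.mem_insert_self _ _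
    rcases Finset.mem_insert.mp this with h | h
    · exact h
    · exact absurd h (hcA i₀)
  · have hsub : ¬ A' ⊆ A := by
      intro hs
      exact hAA' (Finset.eq_of_subset_of_card_le hs (by omega)).symm
    obtain ⟨d, hdA', hdA⟩ := Finset.not_subset.mp hsub
    have hd : ∀ i, d = c i := by
      intro i
      have : d ∈ insert (c i) A := by
        rw [key i]
        exact Finset.mem_insert_of_mem hdA'
      rcases Finset.mem_insert.mp this with h | h
      · exact h
      · exact absurd h hdA
    apply h6 0
    rw [← hd 0, ← hd (0 + 1)]

end Pairs

section Main

/-- the set of earlier columns constraining column `j`. -/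
def window (r j : ℕ) : Finset ℕ := (Finset.range j).filter (fun t => j ≤ t + r)

lemma window_card (r j : ℕ) : (window r j).card ≤ r := by
  have hsub : window r j ⊆ Finset.Ico (j - r) j := by
    intro t ht
    simp only [window, Finset.mem_filter, Finset.mem_range] at ht
    simp only [Finset.mem_Ico]
    omega
  have := Finset.card_le_card hsub
  rw [Nat.card_Ico] at this
  omega

lemma mem_window {r j t : ℕ} : t ∈ window r j ↔ t < j ∧ j ≤ t + r := by
  simp [window]

variable (r : ℕ) (Lab : ZMod m → ℕ → Finset ℕ)

/-- residual lists of column `j` after coloring earlier columns via `f`. -/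
def Res (f : ZMod m → ℕ → ℕ) (j : ℕ) (x : ZMod m) : Finset ℕ :=
  Lab x j \ (window r j).image (f x)

def PROPER (f : ZMod m → ℕ → ℕ) (j : ℕ) : Prop :=
  (∀ x t₁ t₂, t₁ < t₂ → t₂ < j → t₂ ≤ t₁ + r → f x t₁ ≠ f x t₂) ∧
  (∀ x t, t < j → f x t ≠ f (x + 1) t) ∧
  (∀ x t, t < j → f x t ∈ Lab x t)

def updCol (f : ZMod m → ℕ → ℕ) (j : ℕ) (c : ZMod m → ℕ) : ZMod m → ℕ → ℕ :=
  fun x t => if t = j then c x else f x t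

variable {r Lab}
variable (hcard : ∀ x j, (Lab x j).card = r + 2)

include hcard in
lemma Res_card_ge (f : ZMod m → ℕ → ℕ) (j : ℕ) (x : ZMod m) : 2 ≤ (Res r Lab f j x).card := by
  have h1 := Finset.le_card_sdiff ((window r j).image (f x)) (Lab x j)
  have h2 := Finset.card_image_le (s := window r j) (f := f x)
  have h3 := window_card r j
  have h4 := hcard x j
  unfold Res
  omega

lemma updCol_eq_of_ne (f : ZMod m → ℕ → ℕ) (j : ℕ) (c : ZMod m → ℕ) {t : ℕ} (h : t ≠ j) (x : ZMod m) :
    updCol f j c x t = f x t := by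
  simp [updCol, h]

lemma updCol_eq (f : ZMod m → ℕ → ℕ) (j : ℕ) (c : ZMod m → ℕ) (x : ZMod m) :
    updCol f j c x j = c x := by
  simp [updCol]

lemma step_proper {f : ZMod m → ℕ → ℕ} {j : ℕ} {c : ZMod m → ℕ}
    (hf : PROPER r Lab f j) (hc : CProper (Res r Lab f j) c) :
    PROPER r Lab (updCol f j c) (j + 1) := by
  obtain ⟨hrow, hcyc, hmem⟩ := hf
  refine ⟨?_, ?_, ?_⟩
  · intro x t₁ t₂ h1 h2 h3
    rcases Nat.lt_or_ge t₂ j with hlt | hge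
    · rw [updCol_eq_of_ne f j c (by omega) x, updCol_eq_of_ne f j c (by omega) x]
      exact hrow x t₁ t₂ h1 hlt h3
    · have ht2 : t₂ = j := by omega
      rw [ht2, updCol_eq_of_ne f j c (by omega) x, updCol_eq f j c x]
      intro heq
      have hcx := (hc x).1
      have : f x t₁ ∈ (window r j).image (f x) :=
        Finset.mem_image_of_mem _ (mem_window.mpr ⟨by omega, by omega⟩)
      rw [heq] at this
      exact (Finset.mem_sdiff.mp hcx).2 this
  · intro x t ht
    rcases Nat.lt_or_ge t j with hlt | hge
    · rw [updCol_eq_of_ne f j c (by omega) x, updCol_eq_of_ne f j c (by omega) (x+1)]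
      exact hcyc x t hlt
    · have ht2 : t = j := by omega
      rw [ht2, updCol_eq f j c x, updCol_eq f j c (x+1)]
      exact (hc x).2
  · intro x t ht
    rcases Nat.lt_or_ge t j with hlt | hge
    · rw [updCol_eq_of_ne f j c (by omega) x]
      exact hmem x t hlt
    · have ht2 : t = j := by omega
      rw [ht2, updCol_eq f j c x]
      exact (Finset.mem_sdiff.mp (hc x).1).1

include hcard in
lemma key_step (hm : 3 ≤ m) (hr : 1 ≤ r) {f : ZMod m → ℕ → ℕ} {j : ℕ} {c c' : ZMod m → ℕ}
    (hc : CProper (Res r Lab f j) c) (hc' : CProper (Res r Lab f j) c')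
    (hne : c ≠ c') :
    (∃ e, CProper (Res r Lab (updCol f j c) (j+1)) e) ∨
    (∃ e, CProper (Res r Lab (updCol f j c') (j+1)) e) := by
  by_contra hcon
  push_neg at hcon
  obtain ⟨hcon1, hcon2⟩ := hcon
  obtain ⟨A, hA2, hAall⟩ := not_all_eq hm
    (fun x => Res_card_ge hcard (updCol f j c) (j+1) x)
    (fun ⟨e, he⟩ => hcon1 e he)
  obtain ⟨A', hA'2, hA'all⟩ := not_all_eq hm
    (fun x => Res_card_ge hcard (updCol f j c') (j+1) x)
    (fun ⟨e, he⟩ => hcon2 e he)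
  set B : ZMod m → Finset ℕ := fun x => ((window r (j+1)).erase j).image (f x) with hB
  have hjmem : j ∈ window r (j+1) := mem_window.mpr ⟨by omega, by omega⟩
  have himage : ∀ (cc : ZMod m → ℕ) (x : ZMod m),
      (window r (j+1)).image (updCol f j cc x) = insert (cc x) (B x) := by
    intro cc x
    rw [← Finset.insert_erase hjmem, Finset.image_insert, updCol_eq]
    congr 1
    apply Finset.image_congr
    intro t ht
    exact updCol_eq_of_ne f j cc (Finset.ne_of_mem_erase ht) x
  have hres : ∀ (cc : ZMod m → ℕ) (x : ZMod m),
      Res r Lab (updCol f j cc) (j+1) x = Lab x (j+1) \ insert (cc x) (B x) := by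
    intro cc x
    unfold Res
    rw [himage]
  have h1 : ∀ x, Lab x (j+1) \ insert (c x) (B x) = A := by
    intro x; rw [← hres]; exact hAall x
  have h2 : ∀ x, Lab x (j+1) \ insert (c' x) (B x) = A' := by
    intro x; rw [← hres]; exact hA'all x
  have hBcard : ∀ x, (B x).card ≤ r - 1 := by
    intro x
    have h5 : (B x).card ≤ ((window r (j+1)).erase j).card := by
      rw [hB]; exact Finset.card_image_le
    have h6 := Finset.card_erase_of_mem hjmem
    have h7 := window_card r (j+1)
    omega
  have h4 : ∀ x, 3 ≤ (Lab x (j+1) \ B x).card := by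
    intro x
    have h5 := Finset.le_card_sdiff (B x) (Lab x (j+1))
    have h6 := hBcard x
    have h7 := hcard x (j+1)
    omega
  have hnotB : ∀ (cc : ZMod m → ℕ), CProper (Res r Lab f j) cc → ∀ x, cc x ∉ B x := by
    intro cc hcc x hmem
    obtain ⟨t, ht, hteq⟩ := Finset.mem_image.mp hmem
    have ht2 := Finset.mem_of_mem_erase ht
    have ht3 := Finset.ne_of_mem_erase ht
    rw [mem_window] at ht2
    have htw : t ∈ window r j := mem_window.mpr ⟨by omega, by omega⟩
    have : f x t ∈ (window r j).image (f x) := Finset.mem_image_of_mem _ htw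
    rw [hteq] at this
    exact (Finset.mem_sdiff.mp (hcc x).1).2 this
  exact pairs_lemma h1 h2 hA2 hA'2 h4 (hnotB c hc) (hnotB c' hc')
    (Function.ne_iff.mp hne) (fun i => (hc i).2)

include hcard in
theorem abs_coloring (hm : 3 ≤ m) (hmodd : Odd m) (hr : 1 ≤ r) (n : ℕ) :
    ∃ f : ZMod m → ℕ → ℕ,
      (∀ x j, j < n → f x j ∈ Lab x j) ∧
      (∀ x j, j < n → f x j ≠ f (x + 1) j) ∧
      (∀ x t₁ t₂, t₁ < t₂ → t₂ < n → t₂ ≤ t₁ + r → f x t₁ ≠ f x t₂) := by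
  have main : ∀ j, j ≤ n → ∃ f, PROPER r Lab f j ∧ (j < n → ∃ c, CProper (Res r Lab f j) c) := by
    intro j
    induction j with
    | zero =>
        intro _
        refine ⟨fun _ _ => 0, ⟨?_, ?_, ?_⟩, ?_⟩
        · intro x t₁ t₂ h1 h2 h3; omega
        · intro x t ht; omega
        · intro x t ht; omega
        · intro _
          have h3 : 3 ≤ (Res r Lab (fun _ _ => 0) 0 0).card := by
            have hw0 : window r 0 = ∅ := by simp [window]
            have h8 := hcard (0 : ZMod m) 0
            unfold Res
            rw [hw0, Finset.image_empty, Finset.sdiff_empty]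
            omega
          obtain ⟨cc, _, hcc, _, _⟩ := cyc_two_colorings hm
            (fun x => Res_card_ge hcard (fun _ _ => 0) 0 x) 0 h3
          exact ⟨cc, hcc⟩
    | succ j ih =>
        intro hj
        obtain ⟨f, hP, hGood⟩ := ih (by omega)
        obtain ⟨c, hc⟩ := hGood (by omega)
        obtain ⟨c', hc', hcne⟩ := exists_second_coloring hm hmodd
          (fun x => Res_card_ge hcard f j x) hc
        by_cases hjn : j + 1 < n
        · rcases key_step hcard hm hr hc hc' (fun h => hcne h.symm) with h | h
          · exact ⟨updCol f j c, step_proper hP hc, fun _ => h⟩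
          · exact ⟨updCol f j c', step_proper hP hc', fun _ => h⟩
        · exact ⟨updCol f j c, step_proper hP hc, fun h => absurd h hjn⟩
  obtain ⟨f, ⟨hrow, hcyc, hmem⟩, _⟩ := main n le_rfl
  exact ⟨f, fun x j hj => hmem x j hj, fun x j hj => hcyc x j hj,
    fun x t₁ t₂ h1 h2 h3 => hrow x t₁ t₂ h1 h2 h3⟩

end Main

end ATWork


namespace ATPaper

/-- An orientation of a simple graph: each edge receives exactly one direction,
and arcs only exist along edges. -/
structure GraphOrientation {V : Type*} (G : SimpleGraph V) where
  arc : V → V → Prop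
  arc_adj : ∀ u v, arc u v → G.Adj u v
  adj_arc : ∀ u v, G.Adj u v → (arc u v ↔ ¬ arc v u)

variable {V : Type*} [Fintype V]

/-- The set of arcs of an orientation. -/
noncomputable def GraphOrientation.arcs {G : SimpleGraph V} (D : GraphOrientation G) :
    Finset (V × V) :=
  Finset.univ.filter fun p => D.arc p.1 p.2

/-- In-degree of a vertex in a finite set of arcs. -/
noncomputable def indeg (F : Finset (V × V)) (v : V) : ℕ :=
  (F.filter fun p => p.2 = v).card

/-- Out-degree of a vertex in a finite set of arcs. -/
noncomputable def outdeg (F : Finset (V × V)) (v : V) : ℕ :=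
  (F.filter fun p => p.1 = v).card

/-- The circulations contained in an orientation `D`: spanning subdigraphs (sets of
arcs of `D`) in which every vertex has in-degree equal to out-degree. -/
noncomputable def circulations {G : SimpleGraph V} (D : GraphOrientation G) :
    Finset (Finset (V × V)) :=
  D.arcs.powerset.filter fun F => ∀ v, indeg F v = outdeg F v

/-- `G` has an Alon–Tarsi orientation witnessing the bound `k`: an orientation with
maximum in-degree at most `k - 1` in which the numbers of even and odd circulations
differ. -/
noncomputable def HasATOrientation (G : SimpleGraph V) (k : ℕ) : Prop :=
  ∃ D : GraphOrientation G,
    (∀ v, indeg D.arcs v + 1 ≤ k) ∧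
    ((circulations D).filter fun F => Even F.card).card ≠
      ((circulations D).filter fun F => Odd F.card).card

/-- The Alon–Tarsi number of `G`. -/
noncomputable def alonTarsiNumber (G : SimpleGraph V) : ℕ :=
  sInf {k | HasATOrientation G k}

/-- `G` admits a proper coloring from the list assignment `L`. -/
def Choosable {W : Type*} (G : SimpleGraph W) (L : W → Finset ℕ) : Prop :=
  ∃ f : W → ℕ, (∀ v, f v ∈ L v) ∧ ∀ u v, G.Adj u v → f u ≠ f v

/-- `G` is `k`-choosable: colorable from every list assignment with lists of size at
least `k`. -/
def IsKChoosable {W : Type*} (G : SimpleGraph W) (k : ℕ) : Prop :=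
  ∀ L : W → Finset ℕ, (∀ v, k ≤ (L v).card) → Choosable G L

/-- The list chromatic number of `G`. -/
noncomputable def listChromaticNumber {W : Type*} (G : SimpleGraph W) : ℕ :=
  sInf {k | IsKChoosable G k}

/-- The `r`-th power of a graph: distinct vertices are adjacent iff their distance
is at most `r`. -/
def graphPower {W : Type*} (G : SimpleGraph W) (r : ℕ) : SimpleGraph W where
  Adj u v := u ≠ v ∧ G.Reachable u v ∧ G.dist u v ≤ r
  symm := ⟨by
    rintro u v ⟨h1, h2, h3⟩
    exact ⟨h1.symm, h2.symm, by rwa [SimpleGraph.dist_comm]⟩⟩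
  loopless := ⟨by rintro v ⟨h1, -, -⟩; exact h1 rfl⟩

/-- The join of two vertex-disjoint graphs. -/
def joinGraph {A B : Type*} (G : SimpleGraph A) (H : SimpleGraph B) :
    SimpleGraph (A ⊕ B) where
  Adj x y :=
    match x, y with
    | Sum.inl a, Sum.inl b => G.Adj a b
    | Sum.inr a, Sum.inr b => H.Adj a b
    | Sum.inl _, Sum.inr _ => True
    | Sum.inr _, Sum.inl _ => True
  symm := ⟨by
    rintro (a | a) (b | b) h
    · exact G.adj_symm h
    · trivial
    · trivial
    · exact H.adj_symm h⟩
  loopless := ⟨by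
    rintro (a | a) h
    · exact G.irrefl h
    · exact H.irrefl h⟩



open ATWork in
lemma path_walk_length {n : ℕ} {a b : Fin n} (p : (pathGraph n).Walk a b) :
    a.val ≤ b.val + p.length ∧ b.val ≤ a.val + p.length := by
  induction p with
  | nil => simp
  | @cons u w v h p ih =>
      rw [SimpleGraph.pathGraph_adj] at h
      rw [SimpleGraph.Walk.length_cons]
      omega

lemma pathPower_adj_le {n r : ℕ} {a b : Fin n}
    (h : (graphPower (pathGraph n) r).Adj a b) :
    a ≠ b ∧ a.val ≤ b.val + r ∧ b.val ≤ a.val + r := by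
  obtain ⟨hne, hreach, hdist⟩ := h
  obtain ⟨p, hp⟩ := hreach.exists_walk_length_eq_dist
  have hl := path_walk_length p
  rw [hp] at hl
  exact ⟨hne, by omega, by omega⟩

lemma iota_sub {m : ℕ} [NeZero m] (u v : Fin m) :
    (((u - v : Fin m).val : ℕ) : ZMod m) = (u.val : ZMod m) - (v.val : ZMod m) := by
  have h : (u - v : Fin m).val = (m - v.val + u.val) % m := by rw [Fin.sub_def]
  rw [h, ZMod.natCast_mod, Nat.cast_add, Nat.cast_sub (le_of_lt v.isLt), ZMod.natCast_self]
  ring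

lemma cycle_adj_iota {k : ℕ} {u v : Fin (2*k+1)} (h : (cycleGraph (2*k+1)).Adj u v) :
    (u.val : ZMod (2*k+1)) = (v.val : ZMod (2*k+1)) + 1 ∨
    (v.val : ZMod (2*k+1)) = (u.val : ZMod (2*k+1)) + 1 := by
  rw [SimpleGraph.cycleGraph_adj'] at h
  rcases h with h | h
  · left
    have h2 := congrArg (fun t : ℕ => (t : ZMod (2*k+1))) h
    simp only [Nat.cast_one] at h2
    rw [iota_sub] at h2
    have h3 := eq_add_of_sub_eq h2
    rw [h3]; ring
  · right
    have h2 := congrArg (fun t : ℕ => (t : ZMod (2*k+1))) h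
    simp only [Nat.cast_one] at h2
    rw [iota_sub] at h2
    have h3 := eq_add_of_sub_eq h2
    rw [h3]; ring

/-- For positive integers `k, r, n` with `n ≥ 2` and `r ≤ n - 1`:
`χ_ℓ(C_{2k+1} □ P_n^r) ≤ r + 2`. -/
theorem listChromaticNumber_oddCycle_boxProd_pathPower (k r n : ℕ)
    (hk : 1 ≤ k) (hr : 1 ≤ r) (hn : 2 ≤ n) (hrn : r ≤ n - 1) :
    listChromaticNumber (cycleGraph (2 * k + 1) □ graphPower (pathGraph n) r) ≤ r + 2 := by
  have hm3 : 3 ≤ 2*k+1 := by omega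
  have hmodd : Odd (2*k+1) := ⟨k, by ring⟩
  apply Nat.sInf_le
  show IsKChoosable _ (r+2)
  intro L hL
  have hshr : ∀ w : Fin (2*k+1) × Fin n, ∃ t ⊆ L w, t.card = r + 2 :=
    fun w => Finset.exists_subset_card_eq (hL w)
  choose L' hL'sub hL'card using hshr
  set Lab : ZMod (2*k+1) → ℕ → Finset ℕ := fun x j =>
    if h : j < n then L' (⟨x.val, ZMod.val_lt x⟩, ⟨j, h⟩) else Finset.range (r+2) with hLab
  have hcard : ∀ (x : ZMod (2*k+1)) (j : ℕ), (Lab x j).card = r + 2 := by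
    intro x j
    simp only [hLab]
    by_cases h : j < n
    · rw [dif_pos h]; exact hL'card _
    · rw [dif_neg h]; exact Finset.card_range _
  obtain ⟨f, hmem, hcyc, hrow⟩ := ATWork.abs_coloring hcard hm3 hmodd hr n
  have hLabeq : ∀ w : Fin (2*k+1) × Fin n, Lab ((w.1.val : ZMod (2*k+1))) w.2.val = L' w := by
    intro w
    simp only [hLab]
    rw [dif_pos w.2.isLt]
    congr 1
    apply Prod.ext
    · apply Fin.ext
      show (ZMod.val ((w.1.val : ℕ) : ZMod (2*k+1))) = w.1.val
      exact ZMod.val_cast_of_lt w.1.isLt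
    · rfl
  refine ⟨fun w => f ((w.1.val : ZMod (2*k+1))) w.2.val, ?_, ?_⟩
  · intro w
    have hg := hmem ((w.1.val : ZMod (2*k+1))) w.2.val w.2.isLt
    rw [hLabeq w] at hg
    exact hL'sub w hg
  · intro a b hadj
    show f ((a.1.val : ZMod (2*k+1))) a.2.val ≠ f ((b.1.val : ZMod (2*k+1))) b.2.val
    rw [SimpleGraph.boxProd_adj] at hadj
    rcases hadj with ⟨hc, he⟩ | ⟨hp, he⟩
    · rcases cycle_adj_iota hc with h | h
      · rw [h, he]
        intro heq
        exact hcyc ((b.1.val : ZMod (2*k+1))) b.2.val b.2.isLt heq.symm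
      · rw [he]
        intro heq
        rw [h] at heq
        exact hcyc ((a.1.val : ZMod (2*k+1))) b.2.val b.2.isLt heq
    · obtain ⟨hne, h1, h2⟩ := pathPower_adj_le hp
      have hvne : a.2.val ≠ b.2.val := fun hh => hne (Fin.ext hh)
      rw [he]
      rcases Nat.lt_or_ge a.2.val b.2.val with hlt | hge
      · exact hrow ((b.1.val : ZMod (2*k+1))) a.2.val b.2.val hlt b.2.isLt (by omega)
      · have hlt : b.2.val < a.2.val := by omega
        intro heq
        exact hrow ((b.1.val : ZMod (2*k+1))) b.2.val a.2.val hlt a.2.isLt (by omega) heq.symm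


end ATPaper
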